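/- arXiv:2603.15063 — 3 statements merged into one kernel-verified Lean document; each statement's English description precedes it below -/
import Mathlib

section
/- Cost decrease under the shifted candidate: in the setting of the feasibility problem below, let γ > 0 and let ℓ : ℝ^m → ℝ satisfy ℓ(u) ≥ 0 for all u, and define the cost J(N, z, v) = γN + Σ_{j=0}^{N−1} ℓ(v(j) − Kz(j)). Suppose (N, z(·), v(·)) is feasible at x ∈ ℝ^n with N ≥ 2. Then for every A ∈ ℝ^{n×n}, B ∈ ℝ^{n×m} with |[A B] − [Â B̂]| ≤ Δ_S entrywise and every w ∈ 𝒲, setting x⁺ = Ax + Bv(0) + w, there exist sequences (z⁺(·), v⁺(·)) such that (N−1, z⁺, v⁺) is feasible at x⁺ and J(N−1, z⁺, v⁺) ≤ J(N, z, v) − γ. -/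
open Matrix Finset Pointwise

noncomputable section

/-- entrywise absolute value of a real matrix -/
def matAbs {ι κ : Type*} (M : Matrix ι κ ℝ) : Matrix ι κ ℝ := fun i j => |M i j|

/-- interval matrix `C ⊕ [±Δ] = {C + D : |D| ≤ Δ}` -/
def intervalMat {ι κ : Type*} (C Δ : Matrix ι κ ℝ) : Set (Matrix ι κ ℝ) :=
  {X | ∀ i j, |X i j - C i j| ≤ Δ i j}

/-- representation of a matrix zonotope: a center and a list of generators -/
structure ZRep (ι κ : Type*) where
  c : Matrix ι κ ℝ
  g : List (Matrix ι κ ℝ)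

/-- the set of matrices described by a matrix zonotope representation -/
def ZRep.set {ι κ : Type*} (Z : ZRep ι κ) : Set (Matrix ι κ ℝ) :=
  {X | ∃ β : Fin Z.g.length → ℝ, (∀ i, |β i| ≤ 1) ∧ X = Z.c + ∑ i, β i • Z.g.get i}

/-- interval hull `box(⟨M;G⟩) = M ⊕ [± Σ |G_i|]` of a matrix zonotope -/
def ZRep.box {ι κ : Type*} (Z : ZRep ι κ) : Set (Matrix ι κ ℝ) :=
  intervalMat Z.c ((Z.g.map matAbs).sum)

/-- the family `E(F)` of single-entry matrices, as a list -/
def EList {ι κ : Type*} [Fintype ι] [Fintype κ] [DecidableEq ι] [DecidableEq κ]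
    (F : Matrix ι κ ℝ) : List (Matrix ι κ ℝ) :=
  (Finset.univ : Finset (ι × κ)).toList.map fun p => Matrix.single p.1 p.2 (F p.1 p.2)

/-- the operator `𝕋_ℐ` (for `ℐ = C ⊕ [±Δ]`) acting on zonotope representations:
`𝕋_ℐ(⟨M;G₁,…,G_g⟩) = ⟨CM; CG₁,…,CG_g, E(Δ(|M|+Σ|G_i|))⟩` -/
def Tstep {ι κ μ : Type*} [Fintype ι] [Fintype κ] [Fintype μ] [DecidableEq ι] [DecidableEq μ]
    (C Δ : Matrix ι κ ℝ) (Z : ZRep κ μ) : ZRep ι μ :=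
  ⟨C * Z.c, Z.g.map (fun G => C * G) ++ EList (Δ * (matAbs Z.c + (Z.g.map matAbs).sum))⟩

/-- a vector of `ℝ^n` viewed as a column matrix -/
def colVec {n : ℕ} (w : Fin n → ℝ) : Matrix (Fin n) (Fin 1) ℝ := fun i _ => w i

/-- the set `𝒜_K = {Â_K + D[Iₙ; K] : |D| ≤ Δ_S}` -/
def AKset {n m : ℕ} (AhK : Matrix (Fin n) (Fin n) ℝ) (K : Matrix (Fin m) (Fin n) ℝ)
    (ΔS : Matrix (Fin n) (Fin n ⊕ Fin m) ℝ) : Set (Matrix (Fin n) (Fin n) ℝ) :=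
  {X | ∃ D ∈ intervalMat 0 ΔS, X = AhK + D * Matrix.fromRows 1 K}

/-- `ℐ^Δ(j) = [± Σ_{i=0}^{j} |Â_K^{j−i}| F_i]` -/
def IDelta {n m : ℕ} (AhK : Matrix (Fin n) (Fin n) ℝ)
    (FΔ : ℕ → Matrix (Fin n) (Fin n ⊕ Fin m) ℝ) (j : ℕ) :
    Set (Matrix (Fin n) (Fin n ⊕ Fin m) ℝ) :=
  intervalMat 0 (∑ i ∈ Finset.range (j + 1), matAbs (AhK ^ (j - i)) * FΔ i)

/-- `ℐ^𝒲(j) = [± Σ_{i=0}^{j} |Â_K^{j−i}| F^𝒲_i]`, a set of (column) vectors of `ℝ^n` -/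
def IWvec {n : ℕ} (AhK : Matrix (Fin n) (Fin n) ℝ)
    (FW : ℕ → Matrix (Fin n) (Fin 1) ℝ) (j : ℕ) : Set (Matrix (Fin n) (Fin 1) ℝ) :=
  intervalMat 0 (∑ i ∈ Finset.range (j + 1), matAbs (AhK ^ (j - i)) * FW i)

/-- the tube `ℬ(j) = Σ_{i<j} ℐ^Δ(j−i−1)[z(i); v(i)] ⊕ Σ_{i<j} ℐ^𝒲(i)` -/
def Btube {n m : ℕ} (AhK : Matrix (Fin n) (Fin n) ℝ)
    (FΔ : ℕ → Matrix (Fin n) (Fin n ⊕ Fin m) ℝ) (FW : ℕ → Matrix (Fin n) (Fin 1) ℝ)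
    (z : ℕ → Matrix (Fin n) (Fin 1) ℝ) (v : ℕ → Matrix (Fin m) (Fin 1) ℝ) (j : ℕ) :
    Set (Matrix (Fin n) (Fin 1) ℝ) :=
  (∑ i ∈ Finset.range j,
    (fun D => D * Matrix.fromRows (z i) (v i)) '' IDelta AhK FΔ (j - i - 1)) +
  ∑ i ∈ Finset.range j, IWvec AhK FW i

/-- feasibility of `(N, z(·), v(·))` at `x` for the variable-horizon robust control problem -/
def Feasible {n m : ℕ} (Ah : Matrix (Fin n) (Fin n) ℝ) (Bh : Matrix (Fin n) (Fin m) ℝ)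
    (K : Matrix (Fin m) (Fin n) ℝ)
    (FΔ : ℕ → Matrix (Fin n) (Fin n ⊕ Fin m) ℝ) (FW : ℕ → Matrix (Fin n) (Fin 1) ℝ)
    (X : Set (Matrix (Fin n) (Fin 1) ℝ)) (U : Set (Matrix (Fin m) (Fin 1) ℝ))
    (Xf : Set (Matrix (Fin n) (Fin 1) ℝ)) (x : Matrix (Fin n) (Fin 1) ℝ) (N : ℕ)
    (z : ℕ → Matrix (Fin n) (Fin 1) ℝ) (v : ℕ → Matrix (Fin m) (Fin 1) ℝ) : Prop :=
  1 ≤ N ∧ z 0 = x ∧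
  (∀ j < N, z (j + 1) = Ah * z j + Bh * v j) ∧
  (∀ j ≤ N, {z j} + Btube (Ah + Bh * K) FΔ FW z v j ⊆ X) ∧
  (∀ j < N, {v j} + (fun e => K * e) '' Btube (Ah + Bh * K) FΔ FW z v j ⊆ U) ∧
  {z N} + Btube (Ah + Bh * K) FΔ FW z v N ⊆ Xf


/-- partial sums `Σ_{k≤t} |Â_K^{t-k}| F_k` -/
def Psum {n : ℕ} {κ : Type*} (AhK : Matrix (Fin n) (Fin n) ℝ)
    (F : ℕ → Matrix (Fin n) κ ℝ) (t : ℕ) : Matrix (Fin n) κ ℝ :=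
  ∑ k ∈ Finset.range (t + 1), matAbs (AhK ^ (t - k)) * F k

/-- membership in a finite Minkowski sum of sets -/
lemma mem_setSum {ι M : Type*} [AddCommMonoid M] {s : Finset ι} {f : ι → Set M} {x : M} :
    x ∈ (∑ i ∈ s, f i) ↔ ∃ g : ι → M, (∀ i ∈ s, g i ∈ f i) ∧ x = ∑ i ∈ s, g i := by
  classical
  induction s using Finset.cons_induction generalizing x with
  | empty =>
    simp [Set.mem_zero]
  | cons a s ha ih =>
    simp only [Finset.sum_cons]
    constructor
    · rintro hx
      rw [Set.mem_add] at hx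
      obtain ⟨y, hy, z, hz, hyz⟩ := hx
      obtain ⟨g, hg, rfl⟩ := ih.mp hz
      refine ⟨Function.update g a y, fun i hi => ?_, ?_⟩
      · rcases Finset.mem_cons.mp hi with h | h
        · subst h; simpa using hy
        · rw [Function.update_of_ne (by rintro rfl; exact ha h)]
          exact hg i h
      · rw [← hyz]
        congr 1
        · simp
        · exact (Finset.sum_congr rfl fun i hi => by
            rw [Function.update_of_ne (by rintro rfl; exact ha hi)]).symm
    · rintro ⟨g, hg, rfl⟩
      exact Set.add_mem_add (hg a (Finset.mem_cons_self a s))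
        (ih.mpr ⟨g, fun i hi => hg i (Finset.mem_cons.mpr (Or.inr hi)), rfl⟩)

/-- reindexing a triangular double sum -/
lemma dsum {M : Type*} [AddCommMonoid M] (f : ℕ → ℕ → M) (l : ℕ) :
    ∑ i ∈ range (l+1), ∑ k ∈ range i, f i k
      = ∑ t ∈ range l, ∑ k ∈ range (l - t), f (t + k + 1) k := by
  induction l with
  | zero => simp
  | succ l ih =>
    rw [Finset.sum_range_succ, ih]
    have e1 : ∑ t ∈ range (l+1), ∑ k ∈ range (l+1-t), f (t+k+1) k
        = (∑ t ∈ range l, (∑ k ∈ range (l-t), f (t+k+1) k + f (l+1) (l-t))) + f (l+1) 0 := by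
      rw [Finset.sum_range_succ]
      congr 1
      · refine Finset.sum_congr rfl (fun t ht => ?_)
        have h := Finset.mem_range.mp ht
        have h2 : l + 1 - t = (l - t) + 1 := by omega
        rw [h2, Finset.sum_range_succ]
        have h3 : t + (l - t) + 1 = l + 1 := by omega
        rw [h3]
      · have h4 : l + 1 - l = 1 := by omega
        rw [h4, Finset.sum_range_succ, Finset.sum_range_zero, zero_add]
    have e2 : ∑ t ∈ range l, f (l+1) (l - t) = ∑ k ∈ range l, f (l+1) (k+1) := by
      rw [← Finset.sum_range_reflect (fun k => f (l+1) (k+1)) l]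
      refine Finset.sum_congr rfl (fun t ht => ?_)
      have := Finset.mem_range.mp ht
      congr 1
      omega
    rw [e1, Finset.sum_add_distrib, e2,
      Finset.sum_range_succ' (fun k => f (l+1) k) l, add_assoc]

/-- splitting a real bounded by `a + b` -/
lemma split_abs {c a b : ℝ} (ha : 0 ≤ a) (hb : 0 ≤ b) (h : |c| ≤ a + b) :
    ∃ x y : ℝ, c = x + y ∧ |x| ≤ a ∧ |y| ≤ b := by
  rcases abs_le.mp h with ⟨h1, h2⟩
  refine ⟨max (-a) (min a c), c - max (-a) (min a c), by ring, ?_, ?_⟩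
  · rw [abs_le]
    exact ⟨le_max_left _ _, max_le (by linarith) (min_le_left _ _)⟩
  · rw [abs_le]
    constructor
    · have : max (-a) (min a c) ≤ max (-a) c := by
        exact max_le_max le_rfl (min_le_right _ _)
      have h3 : max (-a) c ≤ c + b := max_le (by linarith) (by linarith)
      linarith [le_trans this h3]
    · have h4 : min a c ≤ max (-a) (min a c) := le_max_right _ _
      have h5 : c - b ≤ min a c := le_min (by linarith) (by linarith)
      linarith

/-- realization: a vector entrywise dominated by `P * |ζ|` is of the form `M * ζ`, `|M| ≤ P` -/
lemma exists_realization {n : ℕ} {κ : Type*} [Fintype κ]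
    (P : Matrix (Fin n) κ ℝ) (ζ : Matrix κ (Fin 1) ℝ) (c : Matrix (Fin n) (Fin 1) ℝ)
    (hP : ∀ i k, 0 ≤ P i k) (hc : ∀ i, |c i 0| ≤ (P * matAbs ζ) i 0) :
    ∃ M : Matrix (Fin n) κ ℝ, (∀ i k, |M i k| ≤ P i k) ∧ M * ζ = c := by
  classical
  set b : Fin n → ℝ := fun i => (P * matAbs ζ) i 0 with hbdef
  have hbnn : ∀ i, 0 ≤ b i := by
    intro i
    apply Finset.sum_nonneg
    intro k _
    exact mul_nonneg (hP i k) (abs_nonneg _)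
  set s : κ → ℝ := fun k => if ζ k 0 < 0 then (-1 : ℝ) else 1 with hsdef
  have hs1 : ∀ k, s k * ζ k 0 = |ζ k 0| := by
    intro k
    by_cases h : ζ k 0 < 0
    · simp only [hsdef, if_pos h]
      rw [abs_of_neg h]; ring
    · simp only [hsdef, if_neg h]
      rw [abs_of_nonneg (not_lt.mp h)]; ring
  have habs : ∀ k, |s k| = 1 := by
    intro k
    by_cases h : ζ k 0 < 0 <;> simp [hsdef, h]
  refine ⟨fun i k => if b i = 0 then 0 else P i k * s k * (c i 0 / b i), fun i k => ?_, ?_⟩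
  · by_cases h : b i = 0
    · simpa [h] using hP i k
    · have hbpos : 0 < b i := lt_of_le_of_ne (hbnn i) (Ne.symm h)
      simp only [if_neg h]
      rw [abs_mul, abs_mul, habs, abs_div, mul_one, abs_of_nonneg (hP i k),
        abs_of_pos hbpos]
      calc P i k * (|c i 0| / b i) ≤ P i k * (b i / b i) := by
            exact mul_le_mul_of_nonneg_left
              ((div_le_div_iff_of_pos_right hbpos).mpr (hc i)) (hP i k)
          _ = P i k := by rw [div_self h, mul_one]
  · ext i o
    have ho : o = 0 := Subsingleton.elim _ _
    subst ho
    by_cases h : b i = 0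
    · have hc0 : c i 0 = 0 := by
        have h2 : |c i 0| ≤ b i := hc i
        rw [h] at h2
        exact abs_eq_zero.mp (le_antisymm h2 (abs_nonneg _))
      show ∑ k, (if b i = 0 then (0:ℝ) else P i k * s k * (c i 0 / b i)) * ζ k 0 = c i 0
      simp only [if_pos h, zero_mul, Finset.sum_const_zero, hc0]
    · show ∑ k, (if b i = 0 then (0:ℝ) else P i k * s k * (c i 0 / b i)) * ζ k 0 = c i 0
      simp only [if_neg h]
      have : ∀ k, P i k * s k * (c i 0 / b i) * ζ k 0
          = (c i 0 / b i) * (P i k * |ζ k 0|) := by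
        intro k
        rw [← hs1 k]; ring
      rw [Finset.sum_congr rfl (fun k _ => this k), ← Finset.mul_sum]
      have hb' : ∑ k, P i k * |ζ k 0| = b i := rfl
      rw [hb', div_mul_cancel₀ _ h]

/-- commuting a triangular double sum -/
lemma triangle_comm {M : Type*} [AddCommMonoid M] (F : ℕ → ℕ → M) (l : ℕ) :
    ∑ t ∈ range l, ∑ i ∈ range (l - t), F t i
      = ∑ i ∈ range l, ∑ t ∈ range (l - i), F t i := by
  have key : ∀ (G : ℕ → ℕ → M) (t : ℕ),
      ∑ i ∈ range (l - t), G t i = ∑ i ∈ range l, ite (t + i < l) (G t i) 0 := by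
    intro G t
    rw [← Finset.sum_subset (Finset.range_subset_range.mpr (Nat.sub_le l t))
      (fun x _ hx => by rw [if_neg]; intro h; exact hx (Finset.mem_range.mpr (by omega)))]
    refine Finset.sum_congr rfl fun i hi => ?_
    rw [if_pos]
    have := Finset.mem_range.mp hi
    omega
  rw [Finset.sum_congr rfl fun t _ => key F t,
    Finset.sum_congr rfl fun i _ => key (fun i t => F t i) i, Finset.sum_comm]
  refine Finset.sum_congr rfl fun i _ => Finset.sum_congr rfl fun t _ => ?_
  rw [Nat.add_comm]

/-- the key combinatorial identity -/
lemma star {n : ℕ} (Ab : ℕ → Matrix (Fin n) (Fin n) ℝ) (C : Matrix (Fin n) (Fin n) ℝ)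
    (G : ℕ → Matrix (Fin n) (Fin n) ℝ) (q : ℕ → Matrix (Fin n) (Fin 1) ℝ)
    (hG0 : G 0 = C)
    (hG : ∀ k, G (k+1) = C * ∑ i ∈ range (k+1), Ab (k-i) * G i)
    (hq : ∀ k, q (k+1) = C * ∑ i ∈ range (k+1), Ab (k-i) * q i) :
    ∀ l, ∑ i ∈ range (l+1),
        (∑ k ∈ range (i+1), Ab (i-k) * G k) * (Ab (l-i) * q 0)
        = ∑ k ∈ range (l+1), Ab (l-k) * q (k+1) := by
  intro l
  induction l using Nat.strong_induction_on with
  | _ l IH =>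
  -- step 1 : expand the inner T-sums
  have hT : ∀ i, (∑ k ∈ range (i+1), Ab (i-k) * G k)
      = Ab i * C + ∑ k ∈ range i,
          Ab (i-1-k) * (C * ∑ k' ∈ range (k+1), Ab (k-k') * G k') := by
    intro i
    rw [Finset.sum_range_succ', add_comm, Nat.sub_zero, hG0]
    congr 1
    refine Finset.sum_congr rfl fun k _ => ?_
    have e : i - (k+1) = i - 1 - k := by omega
    rw [e, hG k]
  have e1 : ∑ i ∈ range (l+1),
        (∑ k ∈ range (i+1), Ab (i-k) * G k) * (Ab (l-i) * q 0)
      = (∑ i ∈ range (l+1), (Ab i * C) * (Ab (l-i) * q 0))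
        + ∑ i ∈ range (l+1), ∑ k ∈ range i,
            (Ab (i-1-k) * (C * ∑ k' ∈ range (k+1), Ab (k-k') * G k')) * (Ab (l-i) * q 0) := by
    rw [← Finset.sum_add_distrib]
    refine Finset.sum_congr rfl fun i _ => ?_
    rw [hT i, Matrix.add_mul, Matrix.sum_mul]
  rw [e1]
  -- step 2 : reindex double sum and apply the induction hypothesis
  have d1 : ∑ i ∈ range (l+1), ∑ k ∈ range i,
        (Ab (i-1-k) * (C * ∑ k' ∈ range (k+1), Ab (k-k') * G k')) * (Ab (l-i) * q 0)
      = ∑ t ∈ range l, ∑ k ∈ range (l-t),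
          (Ab (t+k+1-1-k) * (C * ∑ k' ∈ range (k+1), Ab (k-k') * G k')) * (Ab (l-(t+k+1)) * q 0) :=
    dsum _ l
  have e2 : ∑ t ∈ range l, ∑ k ∈ range (l-t),
        (Ab (t+k+1-1-k) * (C * ∑ k' ∈ range (k+1), Ab (k-k') * G k')) * (Ab (l-(t+k+1)) * q 0)
      = ∑ t ∈ range l, ∑ k ∈ range (l-t),
          Ab t * (C * (Ab ((l-1-t)-k) * q (k+1))) := by
    refine Finset.sum_congr rfl fun t ht => ?_
    have ht' := Finset.mem_range.mp ht
    have inner : ∀ k ∈ range (l-t),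
        (Ab (t+k+1-1-k) * (C * ∑ k' ∈ range (k+1), Ab (k-k') * G k')) * (Ab (l-(t+k+1)) * q 0)
        = Ab t * (C * ((∑ k' ∈ range (k+1), Ab (k-k') * G k') * (Ab ((l-1-t)-k) * q 0))) := by
      intro k hk
      have ea : t+k+1-1-k = t := by omega
      have eb : l-(t+k+1) = (l-1-t)-k := by omega
      rw [ea, eb, Matrix.mul_assoc, Matrix.mul_assoc]
    rw [Finset.sum_congr rfl inner, ← Matrix.mul_sum, ← Matrix.mul_sum]
    have er : l - t = (l-1-t) + 1 := by omega
    rw [er, IH (l-1-t) (by omega), Matrix.mul_sum, Matrix.mul_sum]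
  rw [d1, e2]
  -- step 3 : expand the RHS similarly
  have hQ : ∀ k, q (k+1)
      = C * (Ab k * q 0) + C * ∑ i ∈ range k, Ab (k-1-i) * q (i+1) := by
    intro k
    rw [hq k, Finset.sum_range_succ', Nat.sub_zero, Matrix.mul_add, add_comm]
    congr 1
    congr 1
    refine Finset.sum_congr rfl fun i _ => ?_
    have e : k - (i+1) = k - 1 - i := by omega
    rw [e]
  have e3 : ∑ k ∈ range (l+1), Ab (l-k) * q (k+1)
      = (∑ k ∈ range (l+1), Ab (l-k) * (C * (Ab k * q 0)))
        + ∑ k ∈ range (l+1), ∑ i ∈ range k,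
            Ab (l-k) * (C * (Ab (k-1-i) * q (i+1))) := by
    rw [← Finset.sum_add_distrib]
    refine Finset.sum_congr rfl fun k _ => ?_
    rw [hQ k, Matrix.mul_add]
    congr 1
    rw [Matrix.mul_sum, Matrix.mul_sum]
  rw [e3]
  -- step 4 : first sums agree (reflection)
  have e4 : ∑ i ∈ range (l+1), (Ab i * C) * (Ab (l-i) * q 0)
      = ∑ k ∈ range (l+1), Ab (l-k) * (C * (Ab k * q 0)) := by
    rw [← Finset.sum_range_reflect (fun k => Ab (l-k) * (C * (Ab k * q 0))) (l+1)]
    refine Finset.sum_congr rfl fun i hi => ?_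
    have hi' := Finset.mem_range.mp hi
    have ea : l - (l+1-1-i) = i := by omega
    have eb : l+1-1-i = l-i := by omega
    rw [ea, eb, Matrix.mul_assoc]
  rw [e4]
  -- step 5 : second sums agree
  have d2 : ∑ k ∈ range (l+1), ∑ i ∈ range k, Ab (l-k) * (C * (Ab (k-1-i) * q (i+1)))
      = ∑ t ∈ range l, ∑ i ∈ range (l-t),
          Ab (l-(t+i+1)) * (C * (Ab (t+i+1-1-i) * q (i+1))) := dsum _ l
  have t1 : ∑ t ∈ range l, ∑ k ∈ range (l-t), Ab t * (C * (Ab ((l-1-t)-k) * q (k+1)))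
      = ∑ k ∈ range l, ∑ t ∈ range (l-k), Ab t * (C * (Ab ((l-1-t)-k) * q (k+1))) :=
    triangle_comm _ l
  have t2 : ∑ t ∈ range l, ∑ i ∈ range (l-t),
        Ab (l-(t+i+1)) * (C * (Ab (t+i+1-1-i) * q (i+1)))
      = ∑ i ∈ range l, ∑ t ∈ range (l-i),
          Ab (l-(t+i+1)) * (C * (Ab (t+i+1-1-i) * q (i+1))) := triangle_comm _ l
  rw [d2, t1, t2]
  congr 1
  refine Finset.sum_congr rfl fun k hk => ?_
  have hk' := Finset.mem_range.mp hk
  rw [← Finset.sum_range_reflect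
    (fun t => Ab (l-(t+k+1)) * (C * (Ab (t+k+1-1-k) * q (k+1)))) (l-k)]
  refine Finset.sum_congr rfl fun t ht => ?_
  have ht' := Finset.mem_range.mp ht
  have ea : l - ((l-k-1-t)+k+1) = t := by omega
  have eb : (l-k-1-t)+k+1-1-k = (l-1-t)-k := by omega
  rw [ea, eb]

/-- entrywise bound for matrix products -/
lemma entry_abs_mul_le {ι κ μ : Type*} [Fintype κ]
    {M P : Matrix ι κ ℝ} {N Q : Matrix κ μ ℝ}
    (hM : ∀ i k, |M i k| ≤ P i k) (hN : ∀ k j, |N k j| ≤ Q k j) :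
    ∀ i j, |(M * N) i j| ≤ (P * Q) i j := by
  intro i j
  rw [Matrix.mul_apply, Matrix.mul_apply]
  refine le_trans (Finset.abs_sum_le_sum_abs _ _) (Finset.sum_le_sum fun k _ => ?_)
  rw [abs_mul]
  exact mul_le_mul (hM i k) (hN k j) (abs_nonneg _) (le_trans (abs_nonneg _) (hM i k))

/-- entrywise nonnegativity of products -/
lemma entry_mul_nonneg {ι κ μ : Type*} [Fintype κ]
    {M : Matrix ι κ ℝ} {N : Matrix κ μ ℝ}
    (hM : ∀ i k, 0 ≤ M i k) (hN : ∀ k j, 0 ≤ N k j) :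
    ∀ i j, 0 ≤ (M * N) i j := by
  intro i j
  rw [Matrix.mul_apply]
  exact Finset.sum_nonneg fun k _ => mul_nonneg (hM i k) (hN k j)

lemma fromRows_add {ι₁ ι₂ κ : Type*} (a b : Matrix ι₁ κ ℝ) (c d : Matrix ι₂ κ ℝ) :
    Matrix.fromRows (a + b) (c + d) = Matrix.fromRows a c + Matrix.fromRows b d := by
  ext (i | i) j <;> simp

lemma fromColumns_sub {ι κ₁ κ₂ : Type*} (a b : Matrix ι κ₁ ℝ) (c d : Matrix ι κ₂ ℝ) :
    Matrix.fromCols a c - Matrix.fromCols b d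
      = Matrix.fromCols (a - b) (c - d) := by
  ext i (j | j) <;> simp

/-- abs of the `[I; K]` block matrix -/
lemma abs_fromRows_one {n m : ℕ} (K : Matrix (Fin m) (Fin n) ℝ) :
    ∀ (a : Fin n ⊕ Fin m) (b : Fin n),
      |Matrix.fromRows (1 : Matrix (Fin n) (Fin n) ℝ) K a b|
        ≤ Matrix.fromRows (1 : Matrix (Fin n) (Fin n) ℝ) (matAbs K) a b := by
  rintro (a | a) b
  · simp only [Matrix.fromRows_apply_inl, Matrix.one_apply]
    split_ifs <;> simp
  · simp only [Matrix.fromRows_apply_inr, matAbs]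
    exact le_refl _

/-- `Δ_K = Δ_S * [I; |K|]` -/
lemma DeltaK_eq {n m : ℕ} (ΔS : Matrix (Fin n) (Fin n ⊕ Fin m) ℝ)
    (K : Matrix (Fin m) (Fin n) ℝ) :
    ΔS.submatrix id Sum.inl + ΔS.submatrix id Sum.inr * matAbs K
      = ΔS * Matrix.fromRows (1 : Matrix (Fin n) (Fin n) ℝ) (matAbs K) := by
  ext i j
  rw [Matrix.add_apply, Matrix.mul_apply, Matrix.mul_apply, Fintype.sum_sum_type]
  simp only [Matrix.fromRows_apply_inl, Matrix.fromRows_apply_inr, Matrix.one_apply,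
    Matrix.submatrix_apply, id_eq, mul_ite, mul_one, mul_zero]
  rw [Finset.sum_ite_eq' Finset.univ j (fun a => ΔS i (Sum.inl a))]
  simp [add_comm]


/-- KEY LEMMA: the shifted tube is contained in the original tube -/
lemma key {n m : ℕ} (Ah : Matrix (Fin n) (Fin n) ℝ) (Bh : Matrix (Fin n) (Fin m) ℝ)
    (K : Matrix (Fin m) (Fin n) ℝ)
    (ΔS : Matrix (Fin n) (Fin n ⊕ Fin m) ℝ) (hΔS : ∀ i j, 0 ≤ ΔS i j)
    (wbar : Fin n → ℝ) (hwbar : ∀ i, 0 ≤ wbar i)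
    (FΔ : ℕ → Matrix (Fin n) (Fin n ⊕ Fin m) ℝ) (hFΔ0 : FΔ 0 = ΔS)
    (hFΔ : ∀ j, FΔ (j + 1) =
      (ΔS.submatrix id Sum.inl + ΔS.submatrix id Sum.inr * matAbs K) *
        ∑ i ∈ Finset.range (j + 1), matAbs ((Ah + Bh * K) ^ (j - i)) * FΔ i)
    (FW : ℕ → Matrix (Fin n) (Fin 1) ℝ) (hFW0 : FW 0 = colVec wbar)
    (hFW : ∀ j, FW (j + 1) =
      (ΔS.submatrix id Sum.inl + ΔS.submatrix id Sum.inr * matAbs K) *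
        ∑ i ∈ Finset.range (j + 1), matAbs ((Ah + Bh * K) ^ (j - i)) * FW i)
    (z : ℕ → Matrix (Fin n) (Fin 1) ℝ) (v : ℕ → Matrix (Fin m) (Fin 1) ℝ)
    (e : Matrix (Fin n) (Fin 1) ℝ)
    (he : ∀ r (o : Fin 1), |e r o| ≤
      (ΔS * matAbs (Matrix.fromRows (z 0) (v 0)) + colVec wbar) r o) :
    ∀ j, ∀ b ∈ Btube (Ah + Bh * K) FΔ FW
        (fun i => z (i + 1) + (Ah + Bh * K) ^ i * e)
        (fun i => v (i + 1) + K * ((Ah + Bh * K) ^ i * e)) j,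
      (Ah + Bh * K) ^ j * e + b ∈ Btube (Ah + Bh * K) FΔ FW z v (j + 1) := by
  intro j b hb
  classical
  set AhK := Ah + Bh * K with hAhKdef
  set z' : ℕ → Matrix (Fin n) (Fin 1) ℝ := fun i => z (i + 1) + AhK ^ i * e with hz'def
  set v' : ℕ → Matrix (Fin m) (Fin 1) ℝ := fun i => v (i + 1) + K * (AhK ^ i * e) with hv'def
  set Rabs := Matrix.fromRows (1 : Matrix (Fin n) (Fin n) ℝ) (matAbs K) with hRabsdef
  set ζ0 := Matrix.fromRows (z 0) (v 0) with hζ0def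
  have hΔK : ΔS.submatrix id Sum.inl + ΔS.submatrix id Sum.inr * matAbs K = ΔS * Rabs :=
    DeltaK_eq ΔS K
  set Fq : ℕ → Matrix (Fin n) (Fin 1) ℝ := fun k => FΔ k * matAbs ζ0 + FW k with hFqdef
  -- nonnegativity facts
  have hRabsnn : ∀ a b, 0 ≤ Rabs a b := by
    rintro (a | a) b
    · rw [hRabsdef, Matrix.fromRows_apply_inl, Matrix.one_apply]
      split_ifs <;> norm_num
    · rw [hRabsdef, Matrix.fromRows_apply_inr]
      exact abs_nonneg _
  have hFΔnn : ∀ k a c, 0 ≤ FΔ k a c := by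
    intro k
    induction k using Nat.strong_induction_on with
    | _ k IH =>
      match k with
      | 0 => rw [hFΔ0]; exact hΔS
      | Nat.succ k =>
        rw [hFΔ k, hΔK]
        refine entry_mul_nonneg (entry_mul_nonneg hΔS hRabsnn) ?_
        intro a c
        rw [Matrix.sum_apply]
        refine Finset.sum_nonneg fun i hi => ?_
        exact entry_mul_nonneg (fun a b => abs_nonneg _) (IH i (by
          have := Finset.mem_range.mp hi; omega)) a c
  have hFWnn : ∀ k a c, 0 ≤ FW k a c := by
    intro k
    induction k using Nat.strong_induction_on with
    | _ k IH =>
      match k with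
      | 0 => rw [hFW0]; intro a c; exact hwbar a
      | Nat.succ k =>
        rw [hFW k, hΔK]
        refine entry_mul_nonneg (entry_mul_nonneg hΔS hRabsnn) ?_
        intro a c
        rw [Matrix.sum_apply]
        refine Finset.sum_nonneg fun i hi => ?_
        exact entry_mul_nonneg (fun a b => abs_nonneg _) (IH i (by
          have := Finset.mem_range.mp hi; omega)) a c
  have hPΔnn : ∀ t a c, 0 ≤ Psum AhK FΔ t a c := by
    intro t a c
    rw [Psum, Matrix.sum_apply]
    exact Finset.sum_nonneg fun i _ =>
      entry_mul_nonneg (fun a b => abs_nonneg _) (hFΔnn i) a c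
  have hPWnn : ∀ t a c, 0 ≤ Psum AhK FW t a c := by
    intro t a c
    rw [Psum, Matrix.sum_apply]
    exact Finset.sum_nonneg fun i _ =>
      entry_mul_nonneg (fun a b => abs_nonneg _) (hFWnn i) a c
  -- the recursion for Fq
  have hFq : ∀ k, Fq (k + 1)
      = (ΔS * Rabs) * ∑ i ∈ Finset.range (k + 1), matAbs (AhK ^ (k - i)) * Fq i := by
    intro k
    show FΔ (k + 1) * matAbs ζ0 + FW (k + 1) = _
    rw [hFΔ k, hFW k, hΔK, Matrix.mul_assoc, ← Matrix.mul_add]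
    congr 1
    rw [Matrix.sum_mul, ← Finset.sum_add_distrib]
    refine Finset.sum_congr rfl fun i _ => ?_
    show matAbs (AhK ^ (k - i)) * FΔ i * matAbs ζ0 + matAbs (AhK ^ (k - i)) * FW i
      = matAbs (AhK ^ (k - i)) * (FΔ i * matAbs ζ0 + FW i)
    rw [Matrix.mul_add, Matrix.mul_assoc]
  have hGrec : ∀ k, FΔ (k + 1) * Rabs
      = (ΔS * Rabs) * ∑ i ∈ Finset.range (k + 1), matAbs (AhK ^ (k - i)) * (FΔ i * Rabs) := by
    intro k
    rw [hFΔ k, hΔK, Matrix.mul_assoc]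
    congr 1
    rw [Matrix.sum_mul]
    exact Finset.sum_congr rfl fun i _ => Matrix.mul_assoc _ _ _
  have hstar := star (fun t => matAbs (AhK ^ t)) (ΔS * Rabs) (fun k => FΔ k * Rabs) Fq
    (by show FΔ 0 * Rabs = ΔS * Rabs; rw [hFΔ0]) hGrec hFq
  -- decompose b
  have hb' : b ∈ (∑ i ∈ Finset.range j,
        (fun D => D * Matrix.fromRows (z' i) (v' i)) '' IDelta AhK FΔ (j - i - 1))
      + ∑ i ∈ Finset.range j, IWvec AhK FW i := hb
  rw [Set.mem_add] at hb'
  obtain ⟨b1, hb1, b2, hb2, hb12⟩ := hb'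
  rw [mem_setSum] at hb1
  obtain ⟨g1, hg1, hb1sum⟩ := hb1
  rw [mem_setSum] at hb2
  obtain ⟨g2, hg2, hb2sum⟩ := hb2
  have hDex : ∀ i, ∃ D, i ∈ Finset.range j →
      (D ∈ IDelta AhK FΔ (j - i - 1) ∧ g1 i = D * Matrix.fromRows (z' i) (v' i)) := by
    intro i
    by_cases hi : i ∈ Finset.range j
    · obtain ⟨D, hD1, hD2⟩ := hg1 i hi
      exact ⟨D, fun _ => ⟨hD1, hD2.symm⟩⟩
    · exact ⟨0, fun h => absurd h hi⟩
  choose D hD using hDex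
  -- the correction vector
  set c : Matrix (Fin n) (Fin 1) ℝ :=
    AhK ^ j * e + ∑ i ∈ Finset.range j,
      D i * (Matrix.fromRows (1 : Matrix (Fin n) (Fin n) ℝ) K * (AhK ^ i * e)) with hcdef
  have hsplit1 : b1 = (∑ i ∈ Finset.range j, D i * Matrix.fromRows (z (i + 1)) (v (i + 1)))
      + ∑ i ∈ Finset.range j,
          D i * (Matrix.fromRows (1 : Matrix (Fin n) (Fin n) ℝ) K * (AhK ^ i * e)) := by
    rw [hb1sum, ← Finset.sum_add_distrib]
    refine Finset.sum_congr rfl fun i hi => ?_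
    rw [(hD i hi).2]
    have hfr : Matrix.fromRows (z' i) (v' i)
        = Matrix.fromRows (z (i + 1)) (v (i + 1))
          + Matrix.fromRows (1 : Matrix (Fin n) (Fin n) ℝ) K * (AhK ^ i * e) := by
      rw [Matrix.fromRows_mul, Matrix.one_mul, ← fromRows_add, hz'def, hv'def]
    rw [hfr, Matrix.mul_add]
  -- entrywise bound on c
  have heF : ∀ r (o : Fin 1), |e r o| ≤ Fq 0 r o := by
    intro r o
    have h0 : Fq 0 = ΔS * matAbs ζ0 + colVec wbar := by
      show FΔ 0 * matAbs ζ0 + FW 0 = _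
      rw [hFΔ0, hFW0]
    rw [h0]
    exact he r o
  have hcbound1 : ∀ r (o : Fin 1), |c r o| ≤ (matAbs (AhK ^ j) * Fq 0
      + ∑ i ∈ Finset.range j,
          Psum AhK FΔ (j - i - 1) * (Rabs * (matAbs (AhK ^ i) * Fq 0))) r o := by
    intro r o
    rw [hcdef, Matrix.add_apply, Matrix.add_apply]
    refine le_trans (abs_add_le _ _) (add_le_add ?_ ?_)
    · exact entry_abs_mul_le (fun a b => le_refl _) heF r o
    · rw [Matrix.sum_apply, Matrix.sum_apply]
      refine le_trans (Finset.abs_sum_le_sum_abs _ _) (Finset.sum_le_sum fun i hi => ?_)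
      refine entry_abs_mul_le (fun a b => ?_) (entry_abs_mul_le (abs_fromRows_one K)
        (entry_abs_mul_le (fun a b => le_refl _) heF)) r o
      have := (hD i hi).1 a b
      simpa [Psum] using this
  -- rewrite the bound using the star identity
  have hQrec : matAbs (AhK ^ j) * Fq 0
      + (∑ i ∈ Finset.range j,
          Psum AhK FΔ (j - i - 1) * (Rabs * (matAbs (AhK ^ i) * Fq 0)))
      = Psum AhK Fq j := by
    match j with
    | 0 => simp [Psum]
    | Nat.succ l =>
      have hrhs : Psum AhK Fq (l + 1)
          = matAbs (AhK ^ (l + 1)) * Fq 0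
            + ∑ k ∈ Finset.range (l + 1), matAbs (AhK ^ (l + 1 - (k + 1))) * Fq (k + 1) := by
        rw [show Psum AhK Fq (l + 1)
            = ∑ k ∈ Finset.range (l + 1 + 1), matAbs (AhK ^ (l + 1 - k)) * Fq k from rfl,
          Finset.sum_range_succ', add_comm]
        norm_num
      rw [hrhs]
      congr 1
      have e1 : ∑ i ∈ Finset.range (l + 1),
            Psum AhK FΔ (l + 1 - i - 1) * (Rabs * (matAbs (AhK ^ i) * Fq 0))
          = ∑ i ∈ Finset.range (l + 1),
            Psum AhK FΔ i * (Rabs * (matAbs (AhK ^ (l - i)) * Fq 0)) := by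
        rw [← Finset.sum_range_reflect
          (fun i => Psum AhK FΔ i * (Rabs * (matAbs (AhK ^ (l - i)) * Fq 0))) (l + 1)]
        refine Finset.sum_congr rfl fun i hi => ?_
        have hi' := Finset.mem_range.mp hi
        have ea : l + 1 - 1 - i = l + 1 - i - 1 := by omega
        have eb : l - (l + 1 - 1 - i) = i := by omega
        rw [eb, ea]
      rw [e1]
      have e2 : ∀ i ∈ Finset.range (l + 1),
          Psum AhK FΔ i * (Rabs * (matAbs (AhK ^ (l - i)) * Fq 0))
          = (∑ k ∈ Finset.range (i + 1), matAbs (AhK ^ (i - k)) * (FΔ k * Rabs))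
              * (matAbs (AhK ^ (l - i)) * Fq 0) := by
        intro i _
        rw [show Psum AhK FΔ i
            = ∑ k ∈ Finset.range (i + 1), matAbs (AhK ^ (i - k)) * FΔ k from rfl,
          Matrix.sum_mul, Matrix.sum_mul]
        exact Finset.sum_congr rfl fun k _ => by simp only [Matrix.mul_assoc]
      rw [Finset.sum_congr rfl e2, hstar l]
      refine Finset.sum_congr rfl fun k hk => ?_
      have e3 : l + 1 - (k + 1) = l - k := by omega
      rw [e3]
  have hcbound : ∀ r (o : Fin 1), |c r o| ≤ Psum AhK Fq j r o := by
    intro r o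
    rw [← hQrec]
    exact hcbound1 r o
  -- split Psum Fq into the Δ-part and the W-part
  have hQsplit : Psum AhK Fq j = Psum AhK FΔ j * matAbs ζ0 + Psum AhK FW j := by
    rw [Psum, Psum, Psum, Matrix.sum_mul, ← Finset.sum_add_distrib]
    refine Finset.sum_congr rfl fun k _ => ?_
    show matAbs (AhK ^ (j - k)) * (FΔ k * matAbs ζ0 + FW k) = _
    rw [Matrix.mul_add, Matrix.mul_assoc]
  -- split c = c1 + c2
  have hsplitc : ∀ r, ∃ xy : ℝ × ℝ, c r 0 = xy.1 + xy.2
      ∧ |xy.1| ≤ (Psum AhK FΔ j * matAbs ζ0) r 0 ∧ |xy.2| ≤ Psum AhK FW j r 0 := by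
    intro r
    have hb1 : |c r 0| ≤ (Psum AhK FΔ j * matAbs ζ0) r 0 + Psum AhK FW j r 0 := by
      have := hcbound r 0
      rw [hQsplit, Matrix.add_apply] at this
      exact this
    obtain ⟨x, y, h1, h2, h3⟩ := split_abs
      (entry_mul_nonneg (hPΔnn j) (fun a b => abs_nonneg _) r 0) (hPWnn j r 0) hb1
    exact ⟨(x, y), h1, h2, h3⟩
  choose cxy hcxy1 hcxy2 hcxy3 using hsplitc
  set c1 : Matrix (Fin n) (Fin 1) ℝ := fun r _ => (cxy r).1 with hc1def
  set c2 : Matrix (Fin n) (Fin 1) ℝ := fun r _ => (cxy r).2 with hc2def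
  have hcsum : c = c1 + c2 := by
    ext r o
    have ho : o = 0 := Subsingleton.elim _ _
    subst ho
    rw [Matrix.add_apply]
    exact hcxy1 r
  -- realize c1 as M * ζ0
  obtain ⟨M, hM1, hM2⟩ := exists_realization (Psum AhK FΔ j) ζ0 c1 (hPΔnn j)
    (fun r => hcxy2 r)
  -- final assembly
  set h1f : ℕ → Matrix (Fin n) (Fin 1) ℝ := fun i =>
    if i = 0 then M * Matrix.fromRows (z 0) (v 0)
    else D (i - 1) * Matrix.fromRows (z i) (v i) with hh1def
  set h2f : ℕ → Matrix (Fin n) (Fin 1) ℝ := fun i => if i = j then c2 else g2 i with hh2def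
  have hT1 : (∑ i ∈ Finset.range (j + 1), h1f i) ∈ ∑ i ∈ Finset.range (j + 1),
      (fun D => D * Matrix.fromRows (z i) (v i)) '' IDelta AhK FΔ (j + 1 - i - 1) := by
    refine mem_setSum.mpr ⟨h1f, fun i hi => ?_, rfl⟩
    by_cases h0 : i = 0
    · subst h0
      refine ⟨M, ?_, by simp [hh1def]⟩
      have : j + 1 - 0 - 1 = j := by omega
      rw [this]
      intro a b
      rw [Matrix.zero_apply, sub_zero]
      exact hM1 a b
    · have hi' : i - 1 ∈ Finset.range j := by
        have := Finset.mem_range.mp hi; exact Finset.mem_range.mpr (by omega)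
      refine ⟨D (i - 1), ?_, ?_⟩
      · have : j + 1 - i - 1 = j - (i - 1) - 1 := by
          have := Finset.mem_range.mp hi; omega
        rw [this]
        exact (hD (i - 1) hi').1
      · show D (i - 1) * Matrix.fromRows (z i) (v i) = h1f i
        rw [hh1def]
        simp [h0]
  have hT2 : (∑ i ∈ Finset.range (j + 1), h2f i)
      ∈ ∑ i ∈ Finset.range (j + 1), IWvec AhK FW i := by
    refine mem_setSum.mpr ⟨h2f, fun i hi => ?_, rfl⟩
    by_cases hij : i = j
    · subst hij
      show h2f i ∈ intervalMat 0 (∑ k ∈ Finset.range (i + 1), matAbs (AhK ^ (i - k)) * FW k)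
      intro a b
      have hb0 : b = 0 := Subsingleton.elim _ _
      subst hb0
      rw [hh2def]
      simp only [if_pos rfl]
      rw [Matrix.zero_apply, sub_zero]
      exact hcxy3 a
    · have : h2f i = g2 i := by rw [hh2def]; simp [hij]
      rw [this]
      exact hg2 i (Finset.mem_range.mpr (by
        have := Finset.mem_range.mp hi; omega))
  have hT1sum : ∑ i ∈ Finset.range (j + 1), h1f i
      = M * ζ0 + ∑ i ∈ Finset.range j, D i * Matrix.fromRows (z (i + 1)) (v (i + 1)) := by
    rw [Finset.sum_range_succ']
    have ha : h1f 0 = M * ζ0 := by rw [hh1def]; simp [hζ0def]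
    have hbb : ∀ i ∈ Finset.range j, h1f (i + 1)
        = D i * Matrix.fromRows (z (i + 1)) (v (i + 1)) := by
      intro i _
      rw [hh1def]
      simp
    rw [Finset.sum_congr rfl hbb, ha, add_comm]
  have hT2sum : ∑ i ∈ Finset.range (j + 1), h2f i
      = (∑ i ∈ Finset.range j, g2 i) + c2 := by
    rw [Finset.sum_range_succ]
    congr 1
    · refine Finset.sum_congr rfl fun i hi => ?_
      rw [hh2def]
      simp [Nat.ne_of_lt (Finset.mem_range.mp hi)]
    · rw [hh2def]; simp
  have heq : AhK ^ j * e + b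
      = (∑ i ∈ Finset.range (j + 1), h1f i) + ∑ i ∈ Finset.range (j + 1), h2f i := by
    rw [hT1sum, hT2sum, hM2, ← hb12, hsplit1, hb2sum]
    have hce : c1 + c2 = AhK ^ j * e + ∑ i ∈ Finset.range j,
        D i * (Matrix.fromRows (1 : Matrix (Fin n) (Fin n) ℝ) K * (AhK ^ i * e)) := by
      rw [← hcsum, hcdef]
    calc AhK ^ j * e + (((∑ i ∈ Finset.range j, D i * Matrix.fromRows (z (i + 1)) (v (i + 1)))
          + ∑ i ∈ Finset.range j,
              D i * (Matrix.fromRows (1 : Matrix (Fin n) (Fin n) ℝ) K * (AhK ^ i * e)))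
          + ∑ i ∈ Finset.range j, g2 i)
        = (AhK ^ j * e + ∑ i ∈ Finset.range j,
              D i * (Matrix.fromRows (1 : Matrix (Fin n) (Fin n) ℝ) K * (AhK ^ i * e)))
          + ((∑ i ∈ Finset.range j, D i * Matrix.fromRows (z (i + 1)) (v (i + 1)))
          + ∑ i ∈ Finset.range j, g2 i) := by abel
      _ = (c1 + c2) + ((∑ i ∈ Finset.range j, D i * Matrix.fromRows (z (i + 1)) (v (i + 1)))
          + ∑ i ∈ Finset.range j, g2 i) := by rw [hce]
      _ = (c1 + ∑ i ∈ Finset.range j, D i * Matrix.fromRows (z (i + 1)) (v (i + 1)))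
          + ((∑ i ∈ Finset.range j, g2 i) + c2) := by abel
  rw [heq]
  exact Set.add_mem_add hT1 hT2

/-- cost decrease under the shifted candidate solution. -/
theorem stmt17 {n m : ℕ}
    (Ah : Matrix (Fin n) (Fin n) ℝ) (Bh : Matrix (Fin n) (Fin m) ℝ)
    (K : Matrix (Fin m) (Fin n) ℝ)
    (ΔS : Matrix (Fin n) (Fin n ⊕ Fin m) ℝ) (hΔS : ∀ i j, 0 ≤ ΔS i j)
    (wbar : Fin n → ℝ) (hwbar : ∀ i, 0 ≤ wbar i)
    (FΔ : ℕ → Matrix (Fin n) (Fin n ⊕ Fin m) ℝ) (hFΔ0 : FΔ 0 = ΔS)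
    (hFΔ : ∀ j, FΔ (j + 1) =
      (ΔS.submatrix id Sum.inl + ΔS.submatrix id Sum.inr * matAbs K) *
        ∑ i ∈ Finset.range (j + 1), matAbs ((Ah + Bh * K) ^ (j - i)) * FΔ i)
    (FW : ℕ → Matrix (Fin n) (Fin 1) ℝ) (hFW0 : FW 0 = colVec wbar)
    (hFW : ∀ j, FW (j + 1) =
      (ΔS.submatrix id Sum.inl + ΔS.submatrix id Sum.inr * matAbs K) *
        ∑ i ∈ Finset.range (j + 1), matAbs ((Ah + Bh * K) ^ (j - i)) * FW i)
    (X : Set (Matrix (Fin n) (Fin 1) ℝ)) (U : Set (Matrix (Fin m) (Fin 1) ℝ))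
    (Xf : Set (Matrix (Fin n) (Fin 1) ℝ))
    (γ : ℝ) (hγ : 0 < γ) (ℓ : Matrix (Fin m) (Fin 1) ℝ → ℝ) (hℓ : ∀ u, 0 ≤ ℓ u)
    (x : Matrix (Fin n) (Fin 1) ℝ) (N : ℕ) (hN : 2 ≤ N)
    (z : ℕ → Matrix (Fin n) (Fin 1) ℝ) (v : ℕ → Matrix (Fin m) (Fin 1) ℝ)
    (hfeas : Feasible Ah Bh K FΔ FW X U Xf x N z v) :
    ∀ (A : Matrix (Fin n) (Fin n) ℝ) (B : Matrix (Fin n) (Fin m) ℝ),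
      (∀ i j, |Matrix.fromCols A B i j - Matrix.fromCols Ah Bh i j| ≤ ΔS i j) →
      ∀ w ∈ intervalMat 0 (colVec wbar),
        ∃ (z' : ℕ → Matrix (Fin n) (Fin 1) ℝ) (v' : ℕ → Matrix (Fin m) (Fin 1) ℝ),
          Feasible Ah Bh K FΔ FW X U Xf (A * x + B * v 0 + w) (N - 1) z' v' ∧
          γ * ((N - 1 : ℕ) : ℝ) + ∑ j ∈ Finset.range (N - 1), ℓ (v' j - K * z' j) ≤
            (γ * (N : ℝ) + ∑ j ∈ Finset.range N, ℓ (v j - K * z j)) - γ := by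
  intro A B hAB w hw
  obtain ⟨hN1, hz0, hdyn, hX, hU, hXf⟩ := hfeas
  obtain ⟨e, hedef⟩ : ∃ e' : Matrix (Fin n) (Fin 1) ℝ,
      e' = Matrix.fromCols (A - Ah) (B - Bh) * Matrix.fromRows (z 0) (v 0) + w :=
    ⟨_, rfl⟩
  obtain ⟨z', hz'⟩ : ∃ f : ℕ → Matrix (Fin n) (Fin 1) ℝ,
      f = fun i => z (i + 1) + (Ah + Bh * K) ^ i * e := ⟨_, rfl⟩
  obtain ⟨v', hv'⟩ : ∃ f : ℕ → Matrix (Fin m) (Fin 1) ℝ,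
      f = fun i => v (i + 1) + K * ((Ah + Bh * K) ^ i * e) := ⟨_, rfl⟩
  have hz'app : ∀ i, z' i = z (i + 1) + (Ah + Bh * K) ^ i * e := fun i => by rw [hz']
  have hv'app : ∀ i, v' i = v (i + 1) + K * ((Ah + Bh * K) ^ i * e) := fun i => by rw [hv']
  have hD0 : ∀ i k, |Matrix.fromCols (A - Ah) (B - Bh) i k| ≤ ΔS i k := by
    intro i k
    rcases k with k | k
    · simpa [Matrix.sub_apply] using hAB i (Sum.inl k)
    · simpa [Matrix.sub_apply] using hAB i (Sum.inr k)
  have hwabs : ∀ i (o : Fin 1), |w i o| ≤ colVec wbar i o := by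
    intro i o
    have := hw i o
    rwa [Matrix.zero_apply, sub_zero] at this
  have he : ∀ r (o : Fin 1),
      |e r o| ≤ (ΔS * matAbs (Matrix.fromRows (z 0) (v 0)) + colVec wbar) r o := by
    intro r o
    rw [hedef, Matrix.add_apply, Matrix.add_apply]
    refine le_trans (abs_add_le _ _) (add_le_add ?_ (hwabs r o))
    exact entry_abs_mul_le hD0 (fun a b => le_refl _) r o
  have hkey0 := key Ah Bh K ΔS hΔS wbar hwbar FΔ hFΔ0 hFΔ FW hFW0 hFW z v e he
  have hkey : ∀ j, ∀ b ∈ Btube (Ah + Bh * K) FΔ FW z' v' j,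
      (Ah + Bh * K) ^ j * e + b ∈ Btube (Ah + Bh * K) FΔ FW z v (j + 1) := by
    rw [hz', hv']
    exact hkey0
  have hz1 : z 1 = Ah * z 0 + Bh * v 0 := hdyn 0 (by omega)
  have hxplus : A * x + B * v 0 + w = z 1 + e := by
    rw [hz1, hedef, Matrix.fromCols_mul_fromRows,
      Matrix.sub_mul, Matrix.sub_mul, hz0]
    abel
  have hdyn' : ∀ j, j + 1 < N → z' (j + 1) = Ah * z' j + Bh * v' j := by
    intro j hj
    rw [hz'app, hz'app, hv'app]
    have hstep : (Ah + Bh * K) ^ (j + 1) * e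
        = Ah * ((Ah + Bh * K) ^ j * e) + Bh * (K * ((Ah + Bh * K) ^ j * e)) := by
      rw [pow_succ', Matrix.mul_assoc, Matrix.add_mul, Matrix.mul_assoc]
    rw [hdyn (j + 1) hj, hstep]
    simp only [Matrix.mul_add]
    abel
  refine ⟨z', v', ⟨by omega, ?_, ?_, ?_, ?_, ?_⟩, ?_⟩
  · -- initial condition
    rw [hz'app, pow_zero, Matrix.one_mul, hxplus]
  · -- dynamics
    intro j hj
    exact hdyn' j (by omega)
  · -- state constraints
    intro j hj p hp
    rw [Set.mem_add] at hp
    obtain ⟨y, hy, bb, hbb, hybb⟩ := hp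
    rw [Set.mem_singleton_iff] at hy
    subst hy
    have hmem := hkey j bb hbb
    refine hX (j + 1) (by omega) ?_
    rw [Set.mem_add]
    refine ⟨z (j + 1), Set.mem_singleton _, (Ah + Bh * K) ^ j * e + bb, hmem, ?_⟩
    rw [← hybb, hz'app]
    abel
  · -- input constraints
    intro j hj p hp
    rw [Set.mem_add] at hp
    obtain ⟨y, hy, bb, hbb, hybb⟩ := hp
    rw [Set.mem_singleton_iff] at hy
    subst hy
    obtain ⟨b0, hb0, hb0eq⟩ := hbb
    have hmem := hkey j b0 hb0
    refine hU (j + 1) (by omega) ?_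
    rw [Set.mem_add]
    refine ⟨v (j + 1), Set.mem_singleton _, K * ((Ah + Bh * K) ^ j * e + b0),
      ⟨(Ah + Bh * K) ^ j * e + b0, hmem, rfl⟩, ?_⟩
    rw [← hybb, ← hb0eq, hv'app, Matrix.mul_add]
    abel
  · -- terminal constraint
    intro p hp
    rw [Set.mem_add] at hp
    obtain ⟨y, hy, bb, hbb, hybb⟩ := hp
    rw [Set.mem_singleton_iff] at hy
    subst hy
    have hmem := hkey (N - 1) bb hbb
    have hN' : N - 1 + 1 = N := by omega
    rw [hN'] at hmem
    refine hXf ?_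
    rw [Set.mem_add]
    refine ⟨z N, Set.mem_singleton _, (Ah + Bh * K) ^ (N - 1) * e + bb, hmem, ?_⟩
    rw [← hybb, hz'app, hN']
    abel
  · -- cost decrease
    have hcost : ∀ j, v' j - K * z' j = v (j + 1) - K * z (j + 1) := by
      intro j
      rw [hv'app, hz'app, Matrix.mul_add]
      abel
    have hsum : ∑ j ∈ Finset.range (N - 1), ℓ (v' j - K * z' j)
        = ∑ j ∈ Finset.range (N - 1), ℓ (v (j + 1) - K * z (j + 1)) :=
      Finset.sum_congr rfl fun j _ => by rw [hcost j]
    have hsum2 : ∑ j ∈ Finset.range N, ℓ (v j - K * z j)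
        = (∑ j ∈ Finset.range (N - 1), ℓ (v (j + 1) - K * z (j + 1)))
          + ℓ (v 0 - K * z 0) := by
      have hr : Finset.range N = Finset.range ((N - 1) + 1) := by
        congr 1
        omega
      rw [hr, Finset.sum_range_succ']
    have hcast : ((N - 1 : ℕ) : ℝ) = (N : ℝ) - 1 := by
      rw [Nat.cast_sub (by omega)]
      norm_num
    rw [hsum, hsum2, hcast]
    linarith [hℓ (v 0 - K * z 0)]
end
end

section
/- Tube-shift inclusion for the model-uncertainty term: let Â_K ∈ ℝ^{n×n}, K ∈ ℝ^{m×n}, Δ_S ∈ ℝ^{n×(n+m)} with Δ_S ≥ 0, M_K = [Iₙ; K] (the (n+m)×n vertical stacking), Δ_K = Δ_S|M_K|, F_0 = Δ_S, F_{j+1} = Δ_K Σ_{i=0}^j |Â_K^{j−i}| F_i, and ℐ^Δ(j) = [± Σ_{i=0}^j |Â_K^{j−i}| F_i]. Then for every j ≥ 0, every ξ₀ ∈ ℝ^{n+m}, and every δ ∈ [±Δ_S]ξ₀ = {Dξ₀ : |D| ≤ Δ_S}, one has {Â_K^j δ} ⊕ Σ_{i=0}^{j−1} ℐ^Δ(j−i−1){M_K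 Â_K^i δ} ⊆ ℐ^Δ(j)ξ₀. -/
open Matrix Finset Pointwise

noncomputable section

namespace Stmt18Aux

lemma matAbs_one {ι : Type*} [Fintype ι] [DecidableEq ι] :
    matAbs (1 : Matrix ι ι ℝ) = 1 := by
  ext i j
  by_cases h : i = j <;> simp [matAbs, Matrix.one_apply, h]

lemma abs_mul_le {ι κ μ : Type*} [Fintype κ] {A A' : Matrix ι κ ℝ} {B B' : Matrix κ μ ℝ}
    (hA : ∀ i j, |A i j| ≤ A' i j) (hB : ∀ i j, |B i j| ≤ B' i j) :
    ∀ i j, |(A * B) i j| ≤ (A' * B') i j := by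
  intro i j
  calc |(A * B) i j| = |∑ k, A i k * B k j| := by rw [Matrix.mul_apply]
    _ ≤ ∑ k, |A i k * B k j| := Finset.abs_sum_le_sum_abs _ _
    _ ≤ ∑ k, A' i k * B' k j := by
        refine Finset.sum_le_sum fun k _ => ?_
        rw [abs_mul]
        exact mul_le_mul (hA i k) (hB k j) (abs_nonneg _) ((abs_nonneg _).trans (hA i k))
    _ = (A' * B') i j := (Matrix.mul_apply).symm

variable {n m : ℕ} (AhK : Matrix (Fin n) (Fin n) ℝ) (K : Matrix (Fin m) (Fin n) ℝ)
  (ΔS : Matrix (Fin n) (Fin n ⊕ Fin m) ℝ) (FΔ : ℕ → Matrix (Fin n) (Fin n ⊕ Fin m) ℝ)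

def S (j : ℕ) : Matrix (Fin n) (Fin n ⊕ Fin m) ℝ :=
  ∑ i ∈ Finset.range (j + 1), matAbs (AhK ^ (j - i)) * FΔ i

def C (p : ℕ) : Matrix (Fin n) (Fin n ⊕ Fin m) ℝ := matAbs (AhK ^ p) * ΔS

variable (hFΔ0 : FΔ 0 = ΔS)
  (hFΔ : ∀ j, FΔ (j + 1) = (ΔS * matAbs (Matrix.fromRows (1 : Matrix (Fin n) (Fin n) ℝ) K)) * S AhK FΔ j)

local notation "Q" => matAbs (Matrix.fromRows (1 : Matrix (Fin n) (Fin n) ℝ) K)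

include hFΔ0 in
lemma S_zero : S AhK FΔ 0 = ΔS := by
  simp [S, matAbs_one, hFΔ0]

lemma C_zero : C AhK ΔS 0 = ΔS := by
  simp [C, matAbs_one]

include hFΔ0 hFΔ in
lemma leftRec (j : ℕ) :
    S AhK FΔ (j + 1) = C AhK ΔS (j + 1) +
      ∑ k ∈ Finset.range (j + 1), C AhK ΔS (j - k) * Q * S AhK FΔ k := by
  rw [S, Finset.sum_range_succ' (fun i => matAbs (AhK ^ (j + 1 - i)) * FΔ i)]
  rw [add_comm]
  congr 1
  · simp [C, hFΔ0]
  · refine Finset.sum_congr rfl fun l hl => ?_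
    rw [hFΔ l]
    simp [C, Matrix.mul_assoc, Nat.succ_sub_succ]

include hFΔ0 hFΔ in
lemma rightRec (j : ℕ) :
    S AhK FΔ (j + 1) = C AhK ΔS (j + 1) +
      ∑ k ∈ Finset.range (j + 1), S AhK FΔ k * Q * C AhK ΔS (j - k) := by
  induction j using Nat.strong_induction_on with
  | _ j ih =>
    rw [leftRec AhK K ΔS FΔ hFΔ0 hFΔ j]
    congr 1
    rw [Finset.sum_range_succ' (fun k => C AhK ΔS (j - k) * Q * S AhK FΔ k),
        Finset.sum_range_succ' (fun k => S AhK FΔ k * Q * C AhK ΔS (j - k))]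
    have hL : ∀ l ∈ Finset.range j,
        C AhK ΔS (j - (l + 1)) * Q * S AhK FΔ (l + 1) =
          C AhK ΔS (j - 1 - l) * Q * C AhK ΔS (l + 1) +
            ∑ m ∈ Finset.range (l + 1),
              C AhK ΔS (j - 1 - l) * Q * (S AhK FΔ m * Q * C AhK ΔS (l - m)) := by
      intro l hl
      have e : j - (l + 1) = j - 1 - l := by omega
      rw [e, ih l (Finset.mem_range.mp hl), Matrix.mul_add, Matrix.mul_sum]
    have hR : ∀ l ∈ Finset.range j,
        S AhK FΔ (l + 1) * Q * C AhK ΔS (j - (l + 1)) =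
          C AhK ΔS (l + 1) * Q * C AhK ΔS (j - 1 - l) +
            ∑ m ∈ Finset.range (l + 1),
              C AhK ΔS (l - m) * Q * S AhK FΔ m * Q * C AhK ΔS (j - 1 - l) := by
      intro l hl
      have e : j - (l + 1) = j - 1 - l := by omega
      rw [e, leftRec AhK K ΔS FΔ hFΔ0 hFΔ l, Matrix.add_mul, Matrix.add_mul,
        Matrix.sum_mul, Matrix.sum_mul]
    rw [Finset.sum_congr rfl hL, Finset.sum_congr rfl hR, Finset.sum_add_distrib,
      Finset.sum_add_distrib]
    have h0 : C AhK ΔS (j - 0) * Q * S AhK FΔ 0 = C AhK ΔS j * Q * C AhK ΔS 0 := by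
      rw [S_zero AhK ΔS FΔ hFΔ0, C_zero AhK ΔS, Nat.sub_zero]
    have h0' : S AhK FΔ 0 * Q * C AhK ΔS (j - 0) = C AhK ΔS 0 * Q * C AhK ΔS j := by
      rw [S_zero AhK ΔS FΔ hFΔ0, C_zero AhK ΔS, Nat.sub_zero]
    rw [h0, h0']
    have hA : ∑ k ∈ Finset.range (j + 1), C AhK ΔS (j - k) * Q * C AhK ΔS k =
        (∑ l ∈ Finset.range j, C AhK ΔS (j - 1 - l) * Q * C AhK ΔS (l + 1)) +
          C AhK ΔS j * Q * C AhK ΔS 0 := by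
      rw [Finset.sum_range_succ' (fun k => C AhK ΔS (j - k) * Q * C AhK ΔS k)]
      rw [Nat.sub_zero]
      congr 1
      refine Finset.sum_congr rfl fun l hl => ?_
      have e : j - (l + 1) = j - 1 - l := by omega
      rw [e]
    have hB : ∑ k ∈ Finset.range (j + 1), C AhK ΔS k * Q * C AhK ΔS (j - k) =
        (∑ l ∈ Finset.range j, C AhK ΔS (l + 1) * Q * C AhK ΔS (j - 1 - l)) +
          C AhK ΔS 0 * Q * C AhK ΔS j := by
      rw [Finset.sum_range_succ' (fun k => C AhK ΔS k * Q * C AhK ΔS (j - k))]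
      rw [Nat.sub_zero]
      congr 1
      refine Finset.sum_congr rfl fun l hl => ?_
      have e : j - (l + 1) = j - 1 - l := by omega
      rw [e]
    have hAB : ∑ k ∈ Finset.range (j + 1), C AhK ΔS (j - k) * Q * C AhK ΔS k =
        ∑ k ∈ Finset.range (j + 1), C AhK ΔS k * Q * C AhK ΔS (j - k) := by
      rw [← Finset.sum_range_reflect (fun k => C AhK ΔS k * Q * C AhK ΔS (j - k)) (j + 1)]
      refine Finset.sum_congr rfl fun k hk => ?_
      have hk' := Finset.mem_range.mp hk
      have e1 : j + 1 - 1 - k = j - k := by omega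
      have e2 : j - (j - k) = k := by omega
      rw [e1, e2]
    have hsingle :
        (∑ l ∈ Finset.range j, C AhK ΔS (j - 1 - l) * Q * C AhK ΔS (l + 1)) +
            C AhK ΔS j * Q * C AhK ΔS 0 =
          (∑ l ∈ Finset.range j, C AhK ΔS (l + 1) * Q * C AhK ΔS (j - 1 - l)) +
            C AhK ΔS 0 * Q * C AhK ΔS j := by
      rw [← hA, hAB, hB]
    have hdouble :
        (∑ l ∈ Finset.range j, ∑ m ∈ Finset.range (l + 1),
            C AhK ΔS (j - 1 - l) * Q * (S AhK FΔ m * Q * C AhK ΔS (l - m))) =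
          ∑ l ∈ Finset.range j, ∑ m ∈ Finset.range (l + 1),
            C AhK ΔS (l - m) * Q * S AhK FΔ m * Q * C AhK ΔS (j - 1 - l) := by
      rw [Finset.sum_sigma' (Finset.range j) (fun l => Finset.range (l + 1))
          (fun l mm => C AhK ΔS (j - 1 - l) * Q * (S AhK FΔ mm * Q * C AhK ΔS (l - mm))),
        Finset.sum_sigma' (Finset.range j) (fun l => Finset.range (l + 1))
          (fun l mm => C AhK ΔS (l - mm) * Q * S AhK FΔ mm * Q * C AhK ΔS (j - 1 - l))]
      refine Finset.sum_nbij' (fun p => ⟨j - 1 - p.1 + p.2, p.2⟩)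
        (fun p => ⟨j - 1 - p.1 + p.2, p.2⟩) ?_ ?_ ?_ ?_ ?_
      · rintro ⟨l, mm⟩ hp
        simp only [Finset.mem_sigma, Finset.mem_range] at hp ⊢
        omega
      · rintro ⟨l, mm⟩ hp
        simp only [Finset.mem_sigma, Finset.mem_range] at hp ⊢
        omega
      · rintro ⟨l, mm⟩ hp
        simp only [Finset.mem_sigma, Finset.mem_range] at hp
        simp only [Sigma.mk.inj_iff, heq_eq_eq]
        exact ⟨by omega, trivial⟩
      · rintro ⟨l, mm⟩ hp
        simp only [Finset.mem_sigma, Finset.mem_range] at hp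
        simp only [Sigma.mk.inj_iff, heq_eq_eq]
        exact ⟨by omega, trivial⟩
      · rintro ⟨l, mm⟩ hp
        simp only [Finset.mem_sigma, Finset.mem_range] at hp
        have h1 : j - 1 - (j - 1 - l + mm) = l - mm := by omega
        have h2 : (j - 1 - l + mm) - mm = j - 1 - l := by omega
        simp only [h1, h2]
        simp [Matrix.mul_assoc]
    rw [hdouble, add_right_comm, add_right_comm
      (∑ l ∈ Finset.range j, C AhK ΔS (l + 1) * Q * C AhK ΔS (j - 1 - l)), hsingle]

include hFΔ0 hFΔ in
lemma TId (j : ℕ) :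
    C AhK ΔS j + ∑ i ∈ Finset.range j, S AhK FΔ (j - i - 1) * Q * C AhK ΔS i =
      S AhK FΔ j := by
  cases j with
  | zero => simp [S_zero AhK ΔS FΔ hFΔ0, C_zero AhK ΔS]
  | succ t =>
    rw [rightRec AhK K ΔS FΔ hFΔ0 hFΔ t]
    congr 1
    rw [← Finset.sum_range_reflect (fun k => S AhK FΔ k * Q * C AhK ΔS (t - k)) (t + 1)]
    refine Finset.sum_congr rfl fun i hi => ?_
    have hi' := Finset.mem_range.mp hi
    have e1 : t + 1 - i - 1 = t + 1 - 1 - i := by omega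
    have e3 : t + 1 - 1 - i = t - i := by omega
    have e4 : t - (t - i) = i := by omega
    rw [e1, e3, e4]

end Stmt18Aux


/-- tube-shift inclusion for the model-uncertainty term:
`{Â_K^j δ} ⊕ Σ_{i<j} ℐ^Δ(j−i−1){M_K Â_K^i δ} ⊆ ℐ^Δ(j)ξ₀` for every `δ ∈ [±Δ_S]ξ₀`. -/
theorem stmt18 {n m : ℕ} (AhK : Matrix (Fin n) (Fin n) ℝ) (K : Matrix (Fin m) (Fin n) ℝ)
    (ΔS : Matrix (Fin n) (Fin n ⊕ Fin m) ℝ) (hΔS : ∀ i j, 0 ≤ ΔS i j)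
    (FΔ : ℕ → Matrix (Fin n) (Fin n ⊕ Fin m) ℝ) (hFΔ0 : FΔ 0 = ΔS)
    (hFΔ : ∀ j, FΔ (j + 1) =
      (ΔS * matAbs (Matrix.fromRows (1 : Matrix (Fin n) (Fin n) ℝ) K)) *
        ∑ i ∈ Finset.range (j + 1), matAbs (AhK ^ (j - i)) * FΔ i) :
    ∀ (j : ℕ) (ξ₀ : Matrix (Fin n ⊕ Fin m) (Fin 1) ℝ),
      ∀ δ ∈ (fun D => D * ξ₀) '' intervalMat 0 ΔS,
        {AhK ^ j * δ} + ∑ i ∈ Finset.range j,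
            (fun D => D * (Matrix.fromRows 1 K * (AhK ^ i * δ))) ''
              IDelta AhK FΔ (j - i - 1) ⊆
          (fun D => D * ξ₀) '' IDelta AhK FΔ j := by

  intro j ξ₀ δ hδ
  obtain ⟨D, hD, rfl⟩ := hδ
  intro x hx
  obtain ⟨y, hy, z, hz, rfl⟩ := Set.mem_add.mp hx
  rw [Set.mem_singleton_iff] at hy
  subst hy
  obtain ⟨g, hg, rfl⟩ := (Set.mem_finset_sum _ _ _).mp hz
  classical
  have hchoice : ∀ i ∈ Finset.range j, ∃ E, E ∈ IDelta AhK FΔ (j - i - 1) ∧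
      g i = E * (Matrix.fromRows (1 : Matrix (Fin n) (Fin n) ℝ) K * (AhK ^ i * (D * ξ₀))) := by
    intro i hi
    obtain ⟨E, hE, hEq⟩ := hg hi
    exact ⟨E, hE, hEq.symm⟩
  choose! E hE1 hE2 using hchoice
  set Q := matAbs (Matrix.fromRows (1 : Matrix (Fin n) (Fin n) ℝ) K) with hQdef
  have hD' : ∀ a b, |D a b| ≤ ΔS a b := by
    intro a b
    have := hD a b
    simpa using this
  set X := AhK ^ j * D +
    ∑ i ∈ Finset.range j, E i * (Matrix.fromRows (1 : Matrix (Fin n) (Fin n) ℝ) K * (AhK ^ i * D)) with hXdef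
  have hE1' : ∀ i ∈ Finset.range j, ∀ a b,
      |E i a b| ≤ Stmt18Aux.S AhK FΔ (j - i - 1) a b := by
    intro i hi a b
    have := hE1 i hi a b
    simpa [Stmt18Aux.S] using this
  have habs : ∀ (p : ℕ) (a b), |(AhK ^ p) a b| ≤ matAbs (AhK ^ p) a b :=
    fun p a b => le_of_eq rfl
  have hQabs : ∀ a b, |(Matrix.fromRows (1 : Matrix (Fin n) (Fin n) ℝ) K) a b| ≤ Q a b :=
    fun a b => le_of_eq rfl
  have hbound : ∀ i ∈ Finset.range j, ∀ a b,
      |(E i * (Matrix.fromRows (1 : Matrix (Fin n) (Fin n) ℝ) K * (AhK ^ i * D))) a b| ≤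
        (Stmt18Aux.S AhK FΔ (j - i - 1) * Q * Stmt18Aux.C AhK ΔS i) a b := by
    intro i hi a b
    have h1 := Stmt18Aux.abs_mul_le (habs i) hD'
    have h2 := Stmt18Aux.abs_mul_le hQabs h1
    have h3 := Stmt18Aux.abs_mul_le (hE1' i hi) h2 a b
    have e : Stmt18Aux.S AhK FΔ (j - i - 1) * (Q * (matAbs (AhK ^ i) * ΔS)) =
        Stmt18Aux.S AhK FΔ (j - i - 1) * Q * Stmt18Aux.C AhK ΔS i := by
      rw [Stmt18Aux.C, Matrix.mul_assoc]
    rw [e] at h3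
    exact h3
  have hFΔ' : ∀ t, FΔ (t + 1) = (ΔS * Q) * Stmt18Aux.S AhK FΔ t := hFΔ
  have hX : X ∈ IDelta AhK FΔ j := by
    intro a b
    show |X a b - (0 : Matrix (Fin n) (Fin n ⊕ Fin m) ℝ) a b| ≤
      Stmt18Aux.S AhK FΔ j a b
    rw [Matrix.zero_apply, sub_zero]
    have hX1 : X a b = (AhK ^ j * D) a b +
        ∑ i ∈ Finset.range j, (E i * (Matrix.fromRows (1 : Matrix (Fin n) (Fin n) ℝ) K * (AhK ^ i * D))) a b := by
      rw [hXdef, Matrix.add_apply, Matrix.sum_apply]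
    calc |X a b| ≤ |(AhK ^ j * D) a b| +
          |∑ i ∈ Finset.range j, (E i * (Matrix.fromRows (1 : Matrix (Fin n) (Fin n) ℝ) K * (AhK ^ i * D))) a b| := by
            rw [hX1]; exact abs_add_le _ _
      _ ≤ (matAbs (AhK ^ j) * ΔS) a b +
          ∑ i ∈ Finset.range j,
            (Stmt18Aux.S AhK FΔ (j - i - 1) * Q * Stmt18Aux.C AhK ΔS i) a b := by
            refine add_le_add (Stmt18Aux.abs_mul_le (habs j) hD' a b) ?_
            refine le_trans (Finset.abs_sum_le_sum_abs _ _) ?_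
            exact Finset.sum_le_sum fun i hi => hbound i hi a b
      _ = (Stmt18Aux.C AhK ΔS j +
            ∑ i ∈ Finset.range j,
              Stmt18Aux.S AhK FΔ (j - i - 1) * Q * Stmt18Aux.C AhK ΔS i) a b := by
            rw [Matrix.add_apply, Matrix.sum_apply]; rfl
      _ = Stmt18Aux.S AhK FΔ j a b := by
            rw [Stmt18Aux.TId AhK K ΔS FΔ hFΔ0 hFΔ' j]
  refine ⟨X, hX, ?_⟩
  show X * ξ₀ = AhK ^ j * (D * ξ₀) + ∑ i ∈ Finset.range j, g i
  rw [hXdef, Matrix.add_mul, Matrix.sum_mul, Matrix.mul_assoc]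
  congr 1
  refine Finset.sum_congr rfl fun i hi => ?_
  rw [hE2 i hi]
  simp [Matrix.mul_assoc]
end
end

section
/- Tube-shift inclusion for the disturbance term: let Â_K ∈ ℝ^{n×n}, K ∈ ℝ^{m×n}, Δ_S ∈ ℝ^{n×(n+m)} with Δ_S ≥ 0, M_K = [Iₙ; K] (the (n+m)×n vertical stacking), Δ_K = Δ_S|M_K|, and w̄ ∈ ℝ^n with w̄ ≥ 0. Define F_0 = Δ_S, F_{j+1} = Δ_K Σ_{i=0}^j |Â_K^{j−i}| F_i, ℐ^Δ(j) = [± Σ_{i=0}^j |Â_K^{j−i}| F_i], and F^𝒲_0 = w̄, F^𝒲_{j+1} = Δ_K Σ_{i=0}^j |Â_K^{j−i}| F^𝒲_i, ℐ^𝒲(j) = [± Σ_{i=0}^j |Â_K^{j−i}| F^𝒲_i] (a set of vectors in ℝ^n). Then for every j ≥ 0 and every w ∈ [±w̄], one has {Â_K^j w} ⊕ Σ_{i=0}^{j−1} ℐ^Δ(j−i−1){M_K Â_K^i w} ⊆ ℐ^𝒲(j). -/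
open Matrix Finset Pointwise

noncomputable section

/-- triangle double-sum swap -/
lemma tri_swap {α : Type*} [AddCommMonoid α] (n : ℕ) (f : ℕ → ℕ → α) :
    ∑ i ∈ Finset.range n, ∑ k ∈ Finset.range (n - i), f i k
      = ∑ s ∈ Finset.range n, ∑ q ∈ Finset.range (s + 1), f q (s - q) := by
  have h1 : ∀ i, ∑ k ∈ Finset.range (n - i), f i k = ∑ s ∈ Finset.Ico i n, f i (s - i) := by
    intro i
    rw [Finset.sum_Ico_eq_sum_range]
    exact Finset.sum_congr rfl fun k _ => by rw [Nat.add_sub_cancel_left]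
  simp only [h1]
  rw [Finset.range_eq_Ico, Finset.sum_Ico_Ico_comm]
  simp only [Finset.range_eq_Ico]

/-- entrywise bound on a matrix product -/
lemma entry_bound {ι κ μ : Type*} [Fintype κ] (P P' : Matrix ι κ ℝ) (u u' : Matrix κ μ ℝ)
    (hP : ∀ i j, |P i j| ≤ P' i j) (hu : ∀ i j, |u i j| ≤ u' i j) (i : ι) (j : μ) :
    |(P * u) i j| ≤ (P' * u') i j := by
  rw [Matrix.mul_apply, Matrix.mul_apply]
  refine (Finset.abs_sum_le_sum_abs _ _).trans (Finset.sum_le_sum fun k _ => ?_)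
  rw [abs_mul]
  exact mul_le_mul (hP i k) (hu k j) (abs_nonneg _) ((abs_nonneg _).trans (hP i k))

/-- entrywise bound on elements of a finite Minkowski sum of sets of matrices -/
lemma sum_set_bound {ι κ : Type*} (s : Finset ℕ) (f : ℕ → Set (Matrix ι κ ℝ))
    (r : ℕ → Matrix ι κ ℝ) :
    (∀ i ∈ s, ∀ x ∈ f i, ∀ a b, |x a b| ≤ r i a b) →
    ∀ x ∈ ∑ i ∈ s, f i, ∀ a b, |x a b| ≤ (∑ i ∈ s, r i) a b := by
  classical
  induction s using Finset.induction_on with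
  | empty =>
      intro _ x hx a b
      simp only [Finset.sum_empty] at hx ⊢
      rw [Set.mem_zero] at hx
      subst hx; simp
  | @insert a s hnot ih =>
      intro h x hx c d
      rw [Finset.sum_insert hnot, Set.mem_add] at hx
      rw [Finset.sum_insert hnot]
      obtain ⟨y, hy, z, hz, rfl⟩ := hx
      rw [Matrix.add_apply]
      exact (abs_add_le _ _).trans (add_le_add
        (h _ (Finset.mem_insert_self _ _) y hy c d)
        (ih (fun i hi => h i (Finset.mem_insert_of_mem hi)) z hz c d))

/-- key convolution identity: `F^W(s+1) = Σ_{q≤s} FΔ(s−q)|M_K||A^q| w̄` -/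
lemma key1 {n m : ℕ} (AhK : Matrix (Fin n) (Fin n) ℝ) (K : Matrix (Fin m) (Fin n) ℝ)
    (ΔS : Matrix (Fin n) (Fin n ⊕ Fin m) ℝ) (wbar : Fin n → ℝ)
    (FΔ : ℕ → Matrix (Fin n) (Fin n ⊕ Fin m) ℝ) (hFΔ0 : FΔ 0 = ΔS)
    (hFΔ : ∀ j, FΔ (j + 1) =
      (ΔS * matAbs (Matrix.fromRows (1 : Matrix (Fin n) (Fin n) ℝ) K)) *
        ∑ i ∈ Finset.range (j + 1), matAbs (AhK ^ (j - i)) * FΔ i)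
    (FW : ℕ → Matrix (Fin n) (Fin 1) ℝ) (hFW0 : FW 0 = colVec wbar)
    (hFW : ∀ j, FW (j + 1) =
      (ΔS * matAbs (Matrix.fromRows (1 : Matrix (Fin n) (Fin n) ℝ) K)) *
        ∑ i ∈ Finset.range (j + 1), matAbs (AhK ^ (j - i)) * FW i) :
    ∀ s, FW (s + 1) = ∑ q ∈ Finset.range (s + 1),
        FΔ (s - q) * (matAbs (Matrix.fromRows (1 : Matrix (Fin n) (Fin n) ℝ) K) * (matAbs (AhK ^ q) * colVec wbar)) := by
  intro s
  induction s using Nat.strong_induction_on with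
  | _ s ih =>
  set MK := matAbs (Matrix.fromRows (1 : Matrix (Fin n) (Fin n) ℝ) K) with hMK
  set c := colVec wbar with hc
  rw [hFW s, Finset.sum_range_succ', Finset.sum_range_succ, Nat.sub_zero, Nat.sub_self,
    hFΔ0, hFW0, Matrix.mul_add]
  congr 1
  · -- main double sums
    have hL : (ΔS * MK) * ∑ i ∈ Finset.range s, matAbs (AhK ^ (s - (i + 1))) * FW (i + 1)
        = ∑ i ∈ Finset.range s, ∑ q ∈ Finset.range (i + 1),
            (ΔS * MK) * (matAbs (AhK ^ (s - (i + 1))) * (FΔ (i - q) * (MK * (matAbs (AhK ^ q) * c)))) := by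
      rw [Matrix.mul_sum]
      refine Finset.sum_congr rfl fun i hi => ?_
      rw [ih i (Finset.mem_range.mp hi), Matrix.mul_sum, Matrix.mul_sum]
    have hR : ∑ q ∈ Finset.range s,
          FΔ (s - q) * (MK * (matAbs (AhK ^ q) * c))
        = ∑ q ∈ Finset.range s, ∑ k ∈ Finset.range (s - q),
            (ΔS * MK) * (matAbs (AhK ^ (s - q - 1 - k)) * (FΔ k * (MK * (matAbs (AhK ^ q) * c)))) := by
      refine Finset.sum_congr rfl fun q hq => ?_
      have hq' : q < s := Finset.mem_range.mp hq
      have e1 : FΔ (s - q) = FΔ (s - q - 1 + 1) := congrArg FΔ (by omega)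
      rw [e1, hFΔ]
      rw [show s - q - 1 + 1 = s - q from by omega]
      rw [Matrix.mul_assoc, Matrix.sum_mul, Matrix.mul_sum]
      exact Finset.sum_congr rfl fun k _ => by simp only [Matrix.mul_assoc]
    rw [hL, hR,
      tri_swap s (fun q k => (ΔS * MK) * (matAbs (AhK ^ (s - q - 1 - k)) * (FΔ k * (MK * (matAbs (AhK ^ q) * c)))))]
    refine Finset.sum_congr rfl fun i hi => Finset.sum_congr rfl fun q hq => ?_
    have hi' : i < s := Finset.mem_range.mp hi
    have hq' : q < i + 1 := Finset.mem_range.mp hq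
    rw [show s - q - 1 - (i - q) = s - (i + 1) from by omega]
  · rw [Matrix.mul_assoc]

/-- `SW(j) = |A^j| w̄ + Σ_{i<j} SΔ(j−1−i)|M_K||A^i| w̄` -/
lemma key2 {n m : ℕ} (AhK : Matrix (Fin n) (Fin n) ℝ) (K : Matrix (Fin m) (Fin n) ℝ)
    (ΔS : Matrix (Fin n) (Fin n ⊕ Fin m) ℝ) (wbar : Fin n → ℝ)
    (FΔ : ℕ → Matrix (Fin n) (Fin n ⊕ Fin m) ℝ) (hFΔ0 : FΔ 0 = ΔS)
    (hFΔ : ∀ j, FΔ (j + 1) =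
      (ΔS * matAbs (Matrix.fromRows (1 : Matrix (Fin n) (Fin n) ℝ) K)) *
        ∑ i ∈ Finset.range (j + 1), matAbs (AhK ^ (j - i)) * FΔ i)
    (FW : ℕ → Matrix (Fin n) (Fin 1) ℝ) (hFW0 : FW 0 = colVec wbar)
    (hFW : ∀ j, FW (j + 1) =
      (ΔS * matAbs (Matrix.fromRows (1 : Matrix (Fin n) (Fin n) ℝ) K)) *
        ∑ i ∈ Finset.range (j + 1), matAbs (AhK ^ (j - i)) * FW i) :
    ∀ j, ∑ i ∈ Finset.range (j + 1), matAbs (AhK ^ (j - i)) * FW i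
      = matAbs (AhK ^ j) * colVec wbar
        + ∑ i ∈ Finset.range j,
            (∑ k ∈ Finset.range (j - i - 1 + 1), matAbs (AhK ^ (j - i - 1 - k)) * FΔ k)
              * (matAbs (Matrix.fromRows (1 : Matrix (Fin n) (Fin n) ℝ) K) * (matAbs (AhK ^ i) * colVec wbar)) := by
  intro j
  set MK := matAbs (Matrix.fromRows (1 : Matrix (Fin n) (Fin n) ℝ) K) with hMK
  set c := colVec wbar with hc
  rw [Finset.sum_range_succ', Nat.sub_zero, hFW0, add_comm]
  congr 1
  have hL : ∑ i ∈ Finset.range j, matAbs (AhK ^ (j - (i + 1))) * FW (i + 1)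
      = ∑ i ∈ Finset.range j, ∑ q ∈ Finset.range (i + 1),
          matAbs (AhK ^ (j - (i + 1))) * (FΔ (i - q) * (MK * (matAbs (AhK ^ q) * c))) := by
    refine Finset.sum_congr rfl fun i hi => ?_
    rw [key1 AhK K ΔS wbar FΔ hFΔ0 hFΔ FW hFW0 hFW i, Matrix.mul_sum]
  have hR : ∑ i ∈ Finset.range j,
        (∑ k ∈ Finset.range (j - i - 1 + 1), matAbs (AhK ^ (j - i - 1 - k)) * FΔ k)
          * (MK * (matAbs (AhK ^ i) * c))
      = ∑ i ∈ Finset.range j, ∑ k ∈ Finset.range (j - i),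
          matAbs (AhK ^ (j - i - 1 - k)) * (FΔ k * (MK * (matAbs (AhK ^ i) * c))) := by
    refine Finset.sum_congr rfl fun i hi => ?_
    have hi' : i < j := Finset.mem_range.mp hi
    rw [show j - i - 1 + 1 = j - i from by omega, Matrix.sum_mul]
    exact Finset.sum_congr rfl fun k _ => by rw [Matrix.mul_assoc]
  rw [hL, hR,
    tri_swap j (fun i k => matAbs (AhK ^ (j - i - 1 - k)) * (FΔ k * (MK * (matAbs (AhK ^ i) * c))))]
  refine Finset.sum_congr rfl fun i hi => Finset.sum_congr rfl fun q hq => ?_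
  have hi' : i < j := Finset.mem_range.mp hi
  have hq' : q < i + 1 := Finset.mem_range.mp hq
  rw [show j - q - 1 - (i - q) = j - (i + 1) from by omega]

/-- tube-shift inclusion for the disturbance term:
`{Â_K^j w} ⊕ Σ_{i<j} ℐ^Δ(j−i−1){M_K Â_K^i w} ⊆ ℐ^𝒲(j)` for every `w ∈ [±w̄]`. -/
theorem stmt19 {n m : ℕ} (AhK : Matrix (Fin n) (Fin n) ℝ) (K : Matrix (Fin m) (Fin n) ℝ)
    (ΔS : Matrix (Fin n) (Fin n ⊕ Fin m) ℝ) (hΔS : ∀ i j, 0 ≤ ΔS i j)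
    (wbar : Fin n → ℝ) (hwbar : ∀ i, 0 ≤ wbar i)
    (FΔ : ℕ → Matrix (Fin n) (Fin n ⊕ Fin m) ℝ) (hFΔ0 : FΔ 0 = ΔS)
    (hFΔ : ∀ j, FΔ (j + 1) =
      (ΔS * matAbs (Matrix.fromRows (1 : Matrix (Fin n) (Fin n) ℝ) K)) *
        ∑ i ∈ Finset.range (j + 1), matAbs (AhK ^ (j - i)) * FΔ i)
    (FW : ℕ → Matrix (Fin n) (Fin 1) ℝ) (hFW0 : FW 0 = colVec wbar)
    (hFW : ∀ j, FW (j + 1) =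
      (ΔS * matAbs (Matrix.fromRows (1 : Matrix (Fin n) (Fin n) ℝ) K)) *
        ∑ i ∈ Finset.range (j + 1), matAbs (AhK ^ (j - i)) * FW i) :
    ∀ j : ℕ, ∀ w ∈ intervalMat 0 (colVec wbar),
      {AhK ^ j * w} + ∑ i ∈ Finset.range j,
          (fun D => D * (Matrix.fromRows 1 K * (AhK ^ i * w))) ''
            IDelta AhK FΔ (j - i - 1) ⊆
        IWvec AhK FW j := by
  intro j w hw x hx
  rw [Set.mem_add] at hx
  obtain ⟨y, hy, z, hz, rfl⟩ := hx
  rw [Set.mem_singleton_iff] at hy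
  subst hy
  have hw' : ∀ a b, |w a b| ≤ colVec wbar a b := by
    intro a b
    have := hw a b
    simpa using this
  -- bound on z
  have hz' : ∀ a b, |z a b| ≤ (∑ i ∈ Finset.range j,
      (∑ k ∈ Finset.range (j - i - 1 + 1), matAbs (AhK ^ (j - i - 1 - k)) * FΔ k)
        * (matAbs (Matrix.fromRows (1 : Matrix (Fin n) (Fin n) ℝ) K) * (matAbs (AhK ^ i) * colVec wbar))) a b := by
    refine sum_set_bound _ _ _ ?_ z hz
    intro i hi x hx a b
    obtain ⟨D, hD, rfl⟩ := hx
    have hD' : ∀ a b, |D a b| ≤ (∑ k ∈ Finset.range (j - i - 1 + 1),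
        matAbs (AhK ^ (j - i - 1 - k)) * FΔ k) a b := by
      intro a b
      have := hD a b
      simpa using this
    exact entry_bound D _ _ _ hD'
      (entry_bound _ (matAbs (Matrix.fromRows (1 : Matrix (Fin n) (Fin n) ℝ) K)) _ (matAbs (AhK ^ i) * colVec wbar)
        (fun _ _ => le_refl _)
        (entry_bound _ (matAbs (AhK ^ i)) _ (colVec wbar) (fun _ _ => le_refl _) hw')) a b
  intro a b
  rw [key2 AhK K ΔS wbar FΔ hFΔ0 hFΔ FW hFW0 hFW j]
  simp only [Matrix.zero_apply, sub_zero, Matrix.add_apply]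
  exact (abs_add_le _ _).trans (add_le_add
    (entry_bound _ (matAbs (AhK ^ j)) _ (colVec wbar) (fun _ _ => le_refl _) hw' a b)
    (hz' a b))
end
end
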